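/- Let K be a simplicial complex over ℤ/2, σ ∈ K a simplex with no proper cofaces in K, and suppose no cycle of K contains σ. Then the inclusion-induced map H(K∖{σ}) → H(K) is surjective with one-dimensional kernel, the kernel being spanned by the class [∂σ] computed in K∖{σ}; moreover B(K∖{σ}) ⊊ B(K) with codimension 1. -/
import Mathlib


/-- A simplex is a finite set of (natural-number) vertices. -/
abbrev Simplex : Type := Finset ℕ

/-- A chain over ℤ/2 (all degrees together) is a finitely supported
function from simplices to ℤ/2. -/
abbrev Chain : Type := Simplex →₀ ZMod 2

/-- A (finite) simplicial complex: a finite set of simplices closed under faces. -/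
def IsComplex (K : Finset Simplex) : Prop := ∀ s ∈ K, ∀ t ⊆ s, t ∈ K

/-- Boundary of a single simplex over ℤ/2. -/
noncomputable def bdrySimplex (s : Simplex) : Chain :=
  ∑ x ∈ s, Finsupp.single (s.erase x) 1

/-- The boundary operator on chains (all degrees), over ℤ/2. -/
noncomputable def bdry : Chain →ₗ[ZMod 2] Chain :=
  Finsupp.lsum (ZMod 2) fun s => LinearMap.toSpanSingleton (ZMod 2) Chain (bdrySimplex s)

/-- The chain group of a complex `K`: chains supported on `K`. -/
noncomputable def chainsOf (K : Finset Simplex) : Submodule (ZMod 2) Chain :=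
  Finsupp.supported (ZMod 2) (ZMod 2) (↑K : Set Simplex)

/-- The cycle group `Z(K)` (all degrees). -/
noncomputable def cyclesOf (K : Finset Simplex) : Submodule (ZMod 2) Chain :=
  chainsOf K ⊓ LinearMap.ker bdry

/-- The boundary group `B(K)` (all degrees). -/
noncomputable def bdriesOf (K : Finset Simplex) : Submodule (ZMod 2) Chain :=
  Submodule.map bdry (chainsOf K)

theorem chainsOf_mono {K K' : Finset Simplex} (h : K ⊆ K') : chainsOf K ≤ chainsOf K' :=
  Finsupp.supported_mono (by exact_mod_cast h)

theorem cyclesOf_mono {K K' : Finset Simplex} (h : K ⊆ K') : cyclesOf K ≤ cyclesOf K' :=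
  inf_le_inf_right _ (chainsOf_mono h)

theorem bdriesOf_mono {K K' : Finset Simplex} (h : K ⊆ K') : bdriesOf K ≤ bdriesOf K' :=
  Submodule.map_mono (chainsOf_mono h)

/-- `B(K)` viewed inside `Z(K)`. -/
noncomputable def homologyRel (K : Finset Simplex) : Submodule (ZMod 2) (cyclesOf K) :=
  (bdriesOf K).comap (cyclesOf K).subtype

/-- The homology `H(K) = Z(K)/B(K)` over ℤ/2, all degrees summed. -/
noncomputable abbrev homology (K : Finset Simplex) :=
  cyclesOf K ⧸ homologyRel K

/-- The inclusion-induced map on homology. -/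
noncomputable def inducedH {K K' : Finset Simplex} (h : K ⊆ K') :
    homology K →ₗ[ZMod 2] homology K' :=
  Submodule.mapQ _ _ (Submodule.inclusion (cyclesOf_mono h)) (by
    intro x hx
    simp only [homologyRel, Submodule.mem_comap, Submodule.coe_subtype,
      Submodule.coe_inclusion] at hx ⊢
    exact bdriesOf_mono h hx)

open Classical in
/-- The homology class of a chain (zero if the chain is not a cycle of `K`). -/
noncomputable def hclass (K : Finset Simplex) (c : Chain) : homology K :=
  if h : c ∈ cyclesOf K then Submodule.Quotient.mk ⟨c, h⟩ else 0



section Aux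

lemma chain_add_self (c : Chain) : c + c = 0 := by
  rw [← two_smul (ZMod 2) c]
  norm_num
  left; decide

lemma chain_neg (c : Chain) : -c = c :=
  neg_eq_of_add_eq_zero_left (chain_add_self c)

lemma chain_sub (c d : Chain) : c - d = c + d := by
  rw [sub_eq_add_neg, chain_neg]

lemma bdry_single (s : Simplex) (v : ZMod 2) :
    bdry (Finsupp.single s v) = v • bdrySimplex s := by
  simp [bdry]

lemma finset_erase_comm (s : Finset ℕ) (a b : ℕ) :
    (s.erase a).erase b = (s.erase b).erase a := by
  ext c; simp only [Finset.mem_erase]; tauto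

lemma bdry_bdrySimplex (s : Simplex) : bdry (bdrySimplex s) = 0 := by
  unfold bdrySimplex
  rw [map_sum]
  simp only [bdry_single, one_smul]
  unfold bdrySimplex
  rw [Finset.sum_sigma']
  refine Finset.sum_involution (fun p _ => ⟨p.2, p.1⟩) ?_ ?_ ?_ ?_
  · rintro ⟨x, y⟩ ha
    simp only [Finset.mem_sigma, Finset.mem_erase] at ha
    dsimp only
    rw [finset_erase_comm]
    exact chain_add_self _
  · rintro ⟨x, y⟩ ha _
    simp only [Finset.mem_sigma, Finset.mem_erase] at ha
    simp only [Sigma.ext_iff, heq_eq_eq, ne_eq, not_and]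
    intro h; exact fun _ => ha.2.1 h
  · rintro ⟨x, y⟩ ha
    simp only [Finset.mem_sigma, Finset.mem_erase] at ha ⊢
    exact ⟨ha.2.2, fun h => ha.2.1 h.symm, ha.1⟩
  · rintro ⟨x, y⟩ ha; rfl

lemma mem_chainsOf {K : Finset Simplex} {c : Chain} :
    c ∈ chainsOf K ↔ ↑c.support ⊆ (↑K : Set Simplex) :=
  Finsupp.mem_supported _ _

lemma zmod2_cases (a : ZMod 2) : a = 0 ∨ a = 1 := by revert a; decide

instance chainsOf_finite (K : Finset Simplex) : Module.Finite (ZMod 2) (chainsOf K) :=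
  Module.Finite.equiv (Finsupp.supportedEquivFinsupp (↑K : Set Simplex)).symm

instance bdriesOf_finite (K : Finset Simplex) : Module.Finite (ZMod 2) (bdriesOf K) := by
  unfold bdriesOf; infer_instance

end Aux

theorem eraseSubset (K : Finset Simplex) (σ : Simplex) : K.erase σ ⊆ K :=
  fun _ hx => Finset.mem_of_mem_erase hx

/-- if `σ` is a maximal simplex of `K` contained in no cycle of `K`,
then `H(K∖{σ}) → H(K)` is surjective with one-dimensional kernel spanned by `[∂σ]`
(computed in `K∖{σ}`), and `B(K∖{σ}) ⊊ B(K)` has codimension 1. -/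
theorem stmt15 (K : Finset Simplex) (hK : IsComplex K) (σ : Simplex) (hσ : σ ∈ K)
    (hmax : ∀ τ ∈ K, σ ⊆ τ → τ = σ)
    (hnc : ∀ z ∈ cyclesOf K, σ ∉ z.support) :
    Function.Surjective (inducedH (eraseSubset K σ)) ∧
    LinearMap.ker (inducedH (eraseSubset K σ))
      = Submodule.span (ZMod 2)
          {hclass (K.erase σ) (bdry (Finsupp.single σ 1))} ∧
    bdriesOf (K.erase σ) < bdriesOf K ∧
    Module.finrank (ZMod 2) (bdriesOf K)
      = Module.finrank (ZMod 2) (bdriesOf (K.erase σ)) + 1 := by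
  classical
  have hsub := eraseSubset K σ
  -- ∂σ is supported on K.erase σ
  have hsupp : bdrySimplex σ ∈ chainsOf (K.erase σ) := by
    rw [mem_chainsOf]
    intro t ht
    rw [Finset.mem_coe] at ht
    unfold bdrySimplex at ht
    have := Finsupp.support_finset_sum ht
    rw [Finset.mem_biUnion] at this
    obtain ⟨x, hx, hts⟩ := this
    have := Finsupp.support_single_subset hts
    rw [Finset.mem_singleton] at this
    subst this
    rw [Finset.mem_coe, Finset.mem_erase]
    refine ⟨fun h => ?_, hK σ hσ _ (Finset.erase_subset _ _)⟩
    rw [Finset.erase_eq_self] at h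
    exact h hx
  have hbd_cyc : bdrySimplex σ ∈ cyclesOf (K.erase σ) :=
    ⟨hsupp, bdry_bdrySimplex σ⟩
  have hsingle : Finsupp.single σ (1 : ZMod 2) ∈ chainsOf K := by
    rw [mem_chainsOf]
    intro t ht
    rw [Finset.mem_coe] at ht
    have := Finsupp.support_single_subset ht
    rw [Finset.mem_singleton] at this
    subst this
    exact hσ
  have hbdσ : bdry (Finsupp.single σ 1) = bdrySimplex σ := by
    rw [bdry_single, one_smul]
  -- ∂σ is not a boundary of K.erase σ
  have hbd_notmem : bdrySimplex σ ∉ bdriesOf (K.erase σ) := by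
    rintro ⟨c, hc, hbc⟩
    have hcσ : c σ = 0 := by
      by_contra h
      have : σ ∈ c.support := Finsupp.mem_support_iff.mpr h
      have := mem_chainsOf.mp hc this
      rw [Finset.mem_coe, Finset.mem_erase] at this
      exact this.1 rfl
    rw [SetLike.mem_coe] at hc
    have hzmem : c + Finsupp.single σ 1 ∈ cyclesOf K := by
      refine Submodule.mem_inf.mpr ⟨Submodule.add_mem _ (chainsOf_mono hsub hc) hsingle, ?_⟩
      rw [LinearMap.mem_ker, map_add, hbc, hbdσ, chain_add_self]
    have := hnc _ hzmem
    apply this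
    rw [Finsupp.mem_support_iff, Finsupp.add_apply, hcσ, Finsupp.single_apply]
    simp
  -- cycles agree
  have hZ : cyclesOf (K.erase σ) = cyclesOf K := by
    refine le_antisymm (cyclesOf_mono hsub) ?_
    intro z hzK
    obtain ⟨hz1, hz2⟩ := Submodule.mem_inf.mp hzK
    refine Submodule.mem_inf.mpr ⟨?_, hz2⟩
    rw [mem_chainsOf] at hz1 ⊢
    intro t ht
    have htK := hz1 ht
    rw [Finset.mem_coe] at ht htK ⊢
    rw [Finset.mem_erase]
    refine ⟨fun h => ?_, htK⟩
    exact hnc z ⟨hz1, hz2⟩ (h ▸ ht)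
  -- boundaries decompose
  have hB : bdriesOf K = bdriesOf (K.erase σ) ⊔ Submodule.span (ZMod 2) {bdrySimplex σ} := by
    refine le_antisymm ?_ ?_
    · rintro _ ⟨c, hc, rfl⟩
      rw [SetLike.mem_coe] at hc
      have hdec : c = Finsupp.single σ (c σ) + c.erase σ := (Finsupp.single_add_erase σ c).symm
      rw [hdec, map_add]
      refine Submodule.add_mem _ ?_ ?_
      · apply Submodule.mem_sup_right
        rw [bdry_single]
        exact Submodule.smul_mem _ _ (Submodule.mem_span_singleton_self _)
      · apply Submodule.mem_sup_left
        refine ⟨c.erase σ, ?_, rfl⟩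
        rw [SetLike.mem_coe, mem_chainsOf]
        intro t ht
        rw [Finset.mem_coe, Finsupp.support_erase, Finset.mem_erase] at ht
        have := mem_chainsOf.mp hc (Finset.mem_coe.mpr ht.2)
        rw [Finset.mem_coe] at this ⊢
        rw [Finset.mem_erase]
        exact ⟨ht.1, this⟩
    · refine sup_le (bdriesOf_mono hsub) ?_
      rw [Submodule.span_le, Set.singleton_subset_iff]
      exact ⟨Finsupp.single σ 1, hsingle, hbdσ⟩
  -- key membership characterization
  have key : ∀ z : Chain, z ∈ bdriesOf K ↔
      (z ∈ bdriesOf (K.erase σ) ∨ z + bdrySimplex σ ∈ bdriesOf (K.erase σ)) := by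
    intro z
    rw [hB]
    constructor
    · intro h
      rcases Submodule.mem_sup.mp h with ⟨y, hy, w, hw, rfl⟩
      rcases Submodule.mem_span_singleton.mp hw with ⟨a, rfl⟩
      rcases zmod2_cases a with rfl | rfl
      · left; simpa using hy
      · right
        rw [one_smul, add_assoc, chain_add_self, add_zero]
        exact hy
    · rintro (h | h)
      · exact Submodule.mem_sup_left h
      · have h2 : z = (z + bdrySimplex σ) + bdrySimplex σ := by
          rw [add_assoc, chain_add_self, add_zero]
        rw [h2]
        exact Submodule.add_mem _ (Submodule.mem_sup_left h)
          (Submodule.mem_sup_right (Submodule.mem_span_singleton_self _))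
  have hcl : hclass (K.erase σ) (bdry (Finsupp.single σ 1)) =
      Submodule.Quotient.mk ⟨bdrySimplex σ, hbd_cyc⟩ := by
    rw [hbdσ, hclass, dif_pos hbd_cyc]
  have memRel : ∀ (L : Finset Simplex) (x : cyclesOf L),
      x ∈ homologyRel L ↔ (x : Chain) ∈ bdriesOf L := fun L x => Iff.rfl
  have mkeq : ∀ x y : cyclesOf (K.erase σ),
      (Submodule.Quotient.mk x : homology (K.erase σ)) = Submodule.Quotient.mk y ↔
        (x : Chain) + y ∈ bdriesOf (K.erase σ) := by
    intro x y
    rw [Submodule.Quotient.eq, memRel]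
    have : ((x - y : cyclesOf (K.erase σ)) : Chain) = (x : Chain) - y := rfl
    rw [this, chain_sub]
  have mk0 : ∀ x : cyclesOf (K.erase σ),
      (Submodule.Quotient.mk x : homology (K.erase σ)) = 0 ↔
        (x : Chain) ∈ bdriesOf (K.erase σ) := by
    intro x
    rw [Submodule.Quotient.mk_eq_zero, memRel]
  refine ⟨?_, ?_, ?_, ?_⟩
  · -- surjectivity
    intro q
    obtain ⟨⟨z, hz⟩, rfl⟩ := Submodule.Quotient.mk_surjective _ q
    refine ⟨Submodule.Quotient.mk ⟨z, hZ.ge hz⟩, ?_⟩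
    rw [inducedH, Submodule.mapQ_apply]
    rfl
  · -- kernel
    ext x
    obtain ⟨⟨z, hz⟩, rfl⟩ := Submodule.Quotient.mk_surjective _ x
    rw [LinearMap.mem_ker, inducedH, Submodule.mapQ_apply,
      Submodule.Quotient.mk_eq_zero, hcl, Submodule.mem_span_singleton]
    have lhs : (Submodule.inclusion (cyclesOf_mono hsub) ⟨z, hz⟩ ∈ homologyRel K) ↔
        z ∈ bdriesOf K := Iff.rfl
    rw [lhs, key]
    constructor
    · rintro (h | h)
      · exact ⟨0, by rw [zero_smul]; exact ((mk0 ⟨z, hz⟩).mpr h).symm⟩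
      · refine ⟨1, ?_⟩
        rw [one_smul]
        exact (mkeq _ _).mpr (by rwa [add_comm] at h)
    · rintro ⟨a, ha⟩
      rcases zmod2_cases a with rfl | rfl
      · rw [zero_smul] at ha
        exact Or.inl ((mk0 ⟨z, hz⟩).mp ha.symm)
      · rw [one_smul] at ha
        have := (mkeq _ _).mp ha
        exact Or.inr (by rwa [add_comm] at this)
  · -- strict inclusion
    refine lt_of_le_of_ne (bdriesOf_mono hsub) (fun he => hbd_notmem ?_)
    rw [he]
    exact ⟨Finsupp.single σ 1, hsingle, hbdσ⟩
  · -- finrank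
    have hne : bdrySimplex σ ≠ 0 := fun h0 => hbd_notmem (h0 ▸ Submodule.zero_mem _)
    have hinf : bdriesOf (K.erase σ) ⊓ Submodule.span (ZMod 2) {bdrySimplex σ} = ⊥ := by
      rw [eq_bot_iff]
      intro x hx
      obtain ⟨hx1, hx2⟩ := Submodule.mem_inf.mp hx
      rcases Submodule.mem_span_singleton.mp hx2 with ⟨a, rfl⟩
      rcases zmod2_cases a with rfl | rfl
      · simp
      · rw [one_smul] at hx1
        exact absurd hx1 hbd_notmem
    have h := Submodule.finrank_sup_add_finrank_inf_eq (bdriesOf (K.erase σ))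
      (Submodule.span (ZMod 2) {bdrySimplex σ})
    rw [hinf, finrank_bot, add_zero, finrank_span_singleton hne] at h
    rw [hB, h]
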